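/- The ratio of the intra-cluster-only MBR bandwidth to the symmetric MBR bandwidth is bounded: γ_mbr^(0)/γ_mbr^(1) ≤ (2n − k − 1)/(n − 1) = 2 − (k−1)/(n−1), for n > k > n_I ≥ 2 and n = n_I·L. -/

import Mathlib

/-- Ratio of the intra-cluster-only MBR bandwidth to the symmetric one:
`γ_mbr^(0)/γ_mbr^(1) ≤ (2n−k−1)/(n−1) = 2 − (k−1)/(n−1)`,
for `n = n_I·L`, `n > k > n_I ≥ 2`, `L ≥ 2`, `M > 0`. -/
theorem mbr_ratio_bound (n nI k L : ℕ) (M : ℝ) (hL : 2 ≤ L) (hn : n = nI * L)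
    (hnI : 2 ≤ nI) (hk : nI < k) (hkn : k < n) (hM : 0 < M) (g h : ℕ → ℕ)
    (hg : ∀ m, g m = if m ≤ k % nI then k / nI + 1 else k / nI)
    (hh : ∀ t, h t = sInf {s : ℕ | s ∈ Finset.Icc 1 nI ∧ t ≤ ∑ l ∈ Finset.Icc 1 s, g l}) :
    (M * ((nI : ℝ) - 1) / (∑ i ∈ Finset.Icc 1 k, ((nI : ℝ) - h i)))
        / (2 * M * ((n : ℝ) - 1) / ((k : ℝ) * (2 * (n : ℝ) - k - 1)))
      ≤ (2 * (n : ℝ) - k - 1) / ((n : ℝ) - 1) ∧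
    (2 * (n : ℝ) - k - 1) / ((n : ℝ) - 1) = 2 - ((k : ℝ) - 1) / ((n : ℝ) - 1) := by
  set q := k / nI with hq
  set r := k % nI with hr'
  have hr : r < nI := Nat.mod_lt _ (by omega)
  have hqr : nI * q + r = k := Nat.div_add_mod k nI
  set G : ℕ → ℕ := fun s => ∑ l ∈ Finset.Icc 1 s, g l with hGdef
  have hGmono : ∀ s s', s ≤ s' → G s ≤ G s' := fun s s' hss' =>
    Finset.sum_le_sum_of_subset (Finset.Icc_subset_Icc_right hss')
  have hG : ∀ s, s ≤ nI → G s = q * s + min s r := by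
    intro s hs
    induction s with
    | zero => simp [hGdef]
    | succ m ih =>
      have hGm : G (m+1) = G m + g (m+1) := Finset.sum_Icc_succ_top (by omega) _
      rw [hGm, ih (by omega), hg]
      have hmul : q*(m+1) = q*m + q := by ring
      rcases le_or_gt (m+1) r with hc | hc
      · rw [if_pos hc]; omega
      · rw [if_neg (by omega)]; omega
  have hGk : G nI = k := by rw [hG nI le_rfl, min_eq_right hr.le, mul_comm]; omega
  -- characterization of h
  have hhmem : ∀ t, 1 ≤ t → t ≤ k → 1 ≤ h t ∧ h t ≤ nI ∧ t ≤ G (h t) := by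
    intro t ht1 htk
    have hne : {s : ℕ | s ∈ Finset.Icc 1 nI ∧ t ≤ ∑ l ∈ Finset.Icc 1 s, g l}.Nonempty :=
      ⟨nI, ⟨by simp [Finset.mem_Icc]; omega, by show t ≤ G nI; rw [hGk]; exact htk⟩⟩
    have := Nat.sInf_mem hne
    rw [← hh t] at this
    obtain ⟨h1, h2⟩ := this
    simp [Finset.mem_Icc] at h1
    exact ⟨h1.1, h1.2, h2⟩
  have hle : ∀ t s, 1 ≤ t → t ≤ k → 1 ≤ s → s ≤ nI → (h t ≤ s ↔ t ≤ G s) := by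
    intro t s ht1 htk hs1 hs2
    constructor
    · intro hts
      obtain ⟨_, _, h3⟩ := hhmem t ht1 htk
      exact h3.trans (hGmono _ _ hts)
    · intro htG
      rw [hh t]
      exact Nat.sInf_le ⟨by simp [Finset.mem_Icc]; omega, htG⟩
  -- counting identity
  have key : ∑ t ∈ Finset.Icc 1 k, (nI - h t) = ∑ s ∈ Finset.Icc 1 (nI-1), G s := by
    have step1 : ∀ t ∈ Finset.Icc 1 k, nI - h t
        = ∑ s ∈ Finset.Icc 1 (nI-1), (if h t ≤ s then 1 else 0) := by
      intro t ht
      simp only [Finset.mem_Icc] at ht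
      obtain ⟨h1, h2, _⟩ := hhmem t ht.1 ht.2
      rw [← Finset.sum_filter]
      have : Finset.filter (fun s => h t ≤ s) (Finset.Icc 1 (nI-1))
          = Finset.Icc (h t) (nI-1) := by
        ext x; simp [Finset.mem_Icc, Finset.mem_filter]; omega
      rw [this, Finset.sum_const, smul_eq_mul, mul_one, Nat.card_Icc]
      omega
    rw [Finset.sum_congr rfl step1, Finset.sum_comm]
    apply Finset.sum_congr rfl
    intro s hs
    simp only [Finset.mem_Icc] at hs
    rw [← Finset.sum_filter]
    have hsnI : s ≤ nI := by omega
    have hGsk : G s ≤ k := by rw [← hGk]; exact hGmono _ _ hsnI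
    have : Finset.filter (fun t => h t ≤ s) (Finset.Icc 1 k) = Finset.Icc 1 (G s) := by
      ext x; simp only [Finset.mem_Icc, Finset.mem_filter]
      constructor
      · rintro ⟨⟨hx1, hx2⟩, hx3⟩
        exact ⟨hx1, ((hle x s hx1 hx2 hs.1 hsnI).1 hx3)⟩
      · rintro ⟨hx1, hx2⟩
        have hxk : x ≤ k := hx2.trans hGsk
        exact ⟨⟨hx1, hxk⟩, (hle x s hx1 hxk hs.1 hsnI).2 hx2⟩
    rw [this, Finset.sum_const, smul_eq_mul, mul_one, Nat.card_Icc]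
    omega
  -- reflection: 2 * sum G >= k*(nI-1)
  have hrefl : ∑ s ∈ Finset.Icc 1 (nI-1), G s = ∑ s ∈ Finset.Icc 1 (nI-1), G (nI - s) := by
    refine Finset.sum_nbij' (fun i => nI - i) (fun i => nI - i) ?_ ?_ ?_ ?_ ?_ <;>
      intro a ha <;> simp only [Finset.mem_Icc] at * <;> first
        | omega
        | (congr 1; omega)
  have hineq : k * (nI - 1) ≤ 2 * ∑ s ∈ Finset.Icc 1 (nI-1), G s := by
    have : 2 * ∑ s ∈ Finset.Icc 1 (nI-1), G s
        = ∑ s ∈ Finset.Icc 1 (nI-1), (G s + G (nI - s)) := by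
      rw [Finset.sum_add_distrib, ← hrefl]; ring
    rw [this]
    calc k * (nI - 1) = ∑ _s ∈ Finset.Icc 1 (nI-1), k := by
            rw [Finset.sum_const, smul_eq_mul, Nat.card_Icc]
            have hc : nI - 1 + 1 - 1 = nI - 1 := by omega
            rw [hc, mul_comm]
      _ ≤ _ := by
            apply Finset.sum_le_sum
            intro s hs
            simp only [Finset.mem_Icc] at hs
            rw [hG s (by omega), hG (nI - s) (by omega)]
            have hmul : q * s + q * (nI - s) = nI * q := by
              rw [← Nat.mul_add, mul_comm]; congr 2; omega
            have hm1 : min s r + min (nI - s) r ≥ r := by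
              rcases le_total r s with hc | hc
              · rw [min_eq_right hc]; omega
              · rw [min_eq_left hc]
                have : min (nI - s) r ≥ r - s := le_min (by omega) (by omega)
                omega
            omega
  -- pass to reals
  set S : ℝ := ∑ i ∈ Finset.Icc 1 k, ((nI : ℝ) - h i) with hSdef
  have hScast : S = ((∑ t ∈ Finset.Icc 1 k, (nI - h t) : ℕ) : ℝ) := by
    rw [Nat.cast_sum]
    apply Finset.sum_congr rfl
    intro i hi
    simp only [Finset.mem_Icc] at hi
    obtain ⟨_, h2, _⟩ := hhmem i hi.1 hi.2
    rw [Nat.cast_sub h2]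
  have hSk : (k : ℝ) * ((nI:ℝ) - 1) ≤ 2 * S := by
    have h2 := hineq; rw [← key] at h2
    have h3 := (Nat.cast_le (α := ℝ)).2 h2
    push_cast [Nat.cast_sub (show 1 ≤ nI by omega)] at h3
    rw [hScast]
    push_cast
    linarith
  have hk0 : (0:ℝ) < k := by exact_mod_cast (show 0 < k by omega)
  have hnk : (k:ℝ) < n := by exact_mod_cast hkn
  have hn1R : (1:ℝ) < n := by exact_mod_cast (show 1 < n by omega)
  have hnI2 : (2:ℝ) ≤ nI := by exact_mod_cast hnI
  have h2nk : (0:ℝ) < 2*(n:ℝ) - k - 1 := by linarith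
  have hS0 : (0:ℝ) < S := by nlinarith
  have hD : (0:ℝ) < 2 * M * ((n : ℝ) - 1) / ((k : ℝ) * (2 * (n : ℝ) - k - 1)) :=
    div_pos (mul_pos (mul_pos two_pos hM) (by linarith)) (mul_pos hk0 h2nk)
  constructor
  · rw [div_le_iff₀ hD]
    have h1 : M * ((nI:ℝ) - 1) / S ≤ 2 * M / k := by
      rw [div_le_div_iff₀ hS0 hk0]
      nlinarith
    calc M * ((nI:ℝ) - 1) / S ≤ 2 * M / k := h1
      _ = (2 * (n:ℝ) - k - 1) / ((n:ℝ) - 1)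
            * (2 * M * ((n : ℝ) - 1) / ((k : ℝ) * (2 * (n : ℝ) - k - 1))) := by
          rw [div_mul_div_comm]
          rw [div_eq_div_iff hk0.ne' (mul_pos (by linarith : (0:ℝ) < (n:ℝ)-1) (mul_pos hk0 h2nk)).ne']
          ring
  · rw [eq_sub_iff_add_eq, ← add_div, div_eq_iff (by linarith : ((n:ℝ) - 1) ≠ 0)]
    ring
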